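/- Direction (ii)⇒(i) of Lemma 2 (matrix-constrained relaxation): Let M₁ ∈ S^{n₁}, M₂ ∈ ℝ^{n₁×n₂}, M₃ ∈ S^{n₃}, N₁ ∈ S^{n₃}, N₂ ∈ ℝ^{n₃×n₂}, N₃ ∈ S^{n₂} with N₃ ≻ 0. Suppose there exists η > 0 such that the block matrix [[M₁, 0, M₂],[0, M₃ + ηN₁, ηN₂],[M₂ᵀ, ηN₂ᵀ, ηN₃]] is positive definite. Then for every A ∈ ℝ^{n₂×n₃} satisfying [I; A]ᵀ [[N₁, N₂],[N₂ᵀ, N₃]] [I; A] ⪯ 0, the matrix [[M₁, M₂A],[AᵀM₂ᵀ, M₃]] is positive definite. -/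

import Mathlib

open Matrix

/-- Direction (ii)⇒(i) of Lemma 2 (matrix-constrained relaxation). -/
theorem lemma2_ii_implies_i {n₁ n₂ n₃ : ℕ}
    (M₁ : Matrix (Fin n₁) (Fin n₁) ℝ) (hM₁ : M₁.IsSymm)
    (M₂ : Matrix (Fin n₁) (Fin n₂) ℝ)
    (M₃ : Matrix (Fin n₃) (Fin n₃) ℝ) (hM₃ : M₃.IsSymm)
    (N₁ : Matrix (Fin n₃) (Fin n₃) ℝ) (hN₁ : N₁.IsSymm)
    (N₂ : Matrix (Fin n₃) (Fin n₂) ℝ)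
    (N₃ : Matrix (Fin n₂) (Fin n₂) ℝ) (hN₃ : N₃.PosDef)
    (η : ℝ) (hη : 0 < η)
    (hbig : (Matrix.fromBlocks M₁
        (Matrix.fromCols (0 : Matrix (Fin n₁) (Fin n₃) ℝ) M₂)
        (Matrix.fromRows (0 : Matrix (Fin n₃) (Fin n₁) ℝ) M₂.transpose)
        (Matrix.fromBlocks (M₃ + η • N₁) (η • N₂)
          (η • N₂.transpose) (η • N₃))).PosDef) :
    ∀ A : Matrix (Fin n₂) (Fin n₃) ℝ,
      (-( (Matrix.fromRows (1 : Matrix (Fin n₃) (Fin n₃) ℝ) A).transpose *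
          (Matrix.fromBlocks N₁ N₂ N₂.transpose N₃) *
          Matrix.fromRows (1 : Matrix (Fin n₃) (Fin n₃) ℝ) A)).PosSemidef →
      (Matrix.fromBlocks M₁ (M₂ * A) (A.transpose * M₂.transpose) M₃).PosDef := by
  intro A hA
  rw [Matrix.posDef_iff_dotProduct_mulVec] at hbig ⊢
  rw [Matrix.posSemidef_iff_dotProduct_mulVec] at hA
  constructor
  · -- IsHermitian
    unfold Matrix.IsHermitian
    rw [show (fromBlocks M₁ (M₂ * A) (A.transpose * M₂.transpose) M₃)ᴴ
        = (fromBlocks M₁ (M₂ * A) (A.transpose * M₂.transpose) M₃)ᵀ from rfl,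
      Matrix.fromBlocks_transpose, Matrix.transpose_mul, Matrix.transpose_mul,
      Matrix.transpose_transpose, Matrix.transpose_transpose, hM₁.eq, hM₃.eq]
  · intro x hx
    set u : Fin n₁ → ℝ := x ∘ Sum.inl with hu
    set v : Fin n₃ → ℝ := x ∘ Sum.inr with hv
    set w : Fin n₂ → ℝ := A *ᵥ v with hw
    have hxe : x = Sum.elim u v := by
      ext i; cases i <;> rfl
    -- the lifted vector
    set y : (Fin n₁ ⊕ (Fin n₃ ⊕ Fin n₂)) → ℝ := Sum.elim u (Sum.elim v w) with hy
    have hy0 : y ≠ 0 := by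
      intro h
      apply hx
      rw [hxe]
      ext i
      cases i with
      | inl i => exact congrFun h (Sum.inl i)
      | inr i => exact congrFun h (Sum.inr (Sum.inl i))
    have hBig := hbig.2 hy0
    -- the N constraint at v
    have hNle : (Sum.elim v w) ⬝ᵥ (fromBlocks N₁ N₂ N₂.transpose N₃) *ᵥ
        (Sum.elim v w) ≤ 0 := by
      have h1 := hA.2 v
      simp only [Matrix.neg_mulVec, dotProduct_neg, star_trivial] at h1
      have h2 : v ⬝ᵥ ((fromRows (1 : Matrix (Fin n₃) (Fin n₃) ℝ) A)ᵀ *ᵥ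
          ((fromBlocks N₁ N₂ N₂.transpose N₃) *ᵥ
            ((fromRows (1 : Matrix (Fin n₃) (Fin n₃) ℝ) A) *ᵥ v))) ≤ 0 := by
        rw [Matrix.mulVec_mulVec, Matrix.mulVec_mulVec]
        linarith [h1]
      rwa [Matrix.fromRows_mulVec, Matrix.one_mulVec, ← hw,
        Matrix.dotProduct_mulVec, Matrix.vecMul_transpose,
        Matrix.fromRows_mulVec, Matrix.one_mulVec, ← hw] at h2
    -- expand big quadratic form
    have key : star x ⬝ᵥ (fromBlocks M₁ (M₂ * A) (A.transpose * M₂.transpose) M₃) *ᵥ x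
        = star y ⬝ᵥ (Matrix.fromBlocks M₁
            (Matrix.fromCols (0 : Matrix (Fin n₁) (Fin n₃) ℝ) M₂)
            (Matrix.fromRows (0 : Matrix (Fin n₃) (Fin n₁) ℝ) M₂.transpose)
            (Matrix.fromBlocks (M₃ + η • N₁) (η • N₂)
              (η • N₂.transpose) (η • N₃))) *ᵥ y
          - η * ((Sum.elim v w) ⬝ᵥ (fromBlocks N₁ N₂ N₂.transpose N₃) *ᵥ
              (Sum.elim v w)) := by
      simp only [star_trivial, hxe, hy, Matrix.fromBlocks_mulVec,
        sumElim_dotProduct_sumElim, Matrix.fromCols_mulVec_sumElim,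
        Matrix.fromRows_mulVec, Matrix.add_mulVec, Matrix.smul_mulVec,
        dotProduct_add, dotProduct_smul, Matrix.zero_mulVec,
        Matrix.mulVec_zero, dotProduct_zero, zero_dotProduct,
        Sum.elim_comp_inl, Sum.elim_comp_inr,
        ← Matrix.mulVec_mulVec, ← hw, smul_eq_mul]
      have hvN : v ⬝ᵥ A.transpose *ᵥ M₂.transpose *ᵥ u = w ⬝ᵥ M₂.transpose *ᵥ u := by
        rw [Matrix.dotProduct_mulVec, Matrix.vecMul_transpose, hw]
      rw [hvN]
      ring
    rw [key]
    have : 0 ≤ -(η * ((Sum.elim v w) ⬝ᵥ (fromBlocks N₁ N₂ N₂.transpose N₃) *ᵥ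
        (Sum.elim v w))) := by
      have := mul_nonneg hη.le (neg_nonneg.mpr hNle)
      linarith
    linarith
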